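/- Assume C_R ⊆ m_R². Then m_S² = m_R², and consequently the embedding dimension of S equals n + s; that is, dim_k (m_S/m_S²) = dim_k (m_R/m_R²) + s(R). -/

import Mathlib

open PowerSeries
set_option synthInstance.maxHeartbeats 1000000
set_option maxHeartbeats 1000000

noncomputable section

def mxl {k : Type*} [Field k] (R : Subalgebra k (PowerSeries k)) : Ideal R :=
  RingHom.ker ((constantCoeff : PowerSeries k →+* k).comp R.val.toRingHom)

def condIdeal {k : Type*} [Field k] (R : Subalgebra k (PowerSeries k)) : Ideal R where
  carrier := {r : R | ∀ g : PowerSeries k, (r : PowerSeries k) * g ∈ R}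
  add_mem' := by
    intro a b ha hb g
    have := R.add_mem (ha g) (hb g)
    simpa [add_mul] using this
  zero_mem' := by
    intro g
    simpa using R.zero_mem
  smul_mem' := by
    intro c x hx g
    have h : ((c • x : R) : PowerSeries k) * g
        = (c : PowerSeries k) * ((x : PowerSeries k) * g) := by
      rw [smul_eq_mul, MulMemClass.coe_mul]
      ring
    rw [h]
    exact R.mul_mem c.2 (hx g)

/-- The reduced type `s(R) = dim_k (C_R + x₁R)/(x₁R)`, computed as the dimension of the
image of the conductor in `R/(x₁)`. -/
def redType {k : Type*} [Field k] (R : Subalgebra k (PowerSeries k)) (x1 : R) : ℕ :=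
  Module.finrank k (Submodule.restrictScalars k
    (Ideal.map (Ideal.Quotient.mk (Ideal.span {x1})) (condIdeal R)))


/-- The embedding dimension `dim_k m/m²` of a subalgebra of `k⟦t⟧`. -/
def edim {k : Type*} [Field k] (A : Subalgebra k (PowerSeries k)) : ℕ :=
  Module.finrank k (Submodule.restrictScalars k
    (Ideal.map (Ideal.Quotient.mk ((mxl A) ^ 2)) (mxl A)))

/-! ### Auxiliary lemmas -/

section Aux

variable {k : Type*} [Field k]

lemma key_finrank' {A : Type*} [CommRing A] [Algebra k A] (I J : Ideal A) :
    Module.finrank k (Submodule.restrictScalars k (Ideal.map (Ideal.Quotient.mk J) I)) =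
      Module.finrank k ((I.restrictScalars k) ⧸
        ((J.restrictScalars k).comap (I.restrictScalars k).subtype)) := by
  let f : A →ₗ[k] A ⧸ J := (Ideal.Quotient.mkₐ k J).toLinearMap
  let g := f.domRestrict (I.restrictScalars k)
  have hker : LinearMap.ker g = (J.restrictScalars k).comap (I.restrictScalars k).subtype := by
    ext x
    simp [g, f, LinearMap.mem_ker, Ideal.Quotient.eq_zero_iff_mem]
  have hrange : LinearMap.range g
      = Submodule.restrictScalars k (Ideal.map (Ideal.Quotient.mk J) I) := by
    ext z
    rw [Submodule.restrictScalars_mem,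
      Ideal.mem_map_iff_of_surjective _ Ideal.Quotient.mk_surjective]
    simp only [LinearMap.mem_range]
    constructor
    · rintro ⟨⟨a, haI⟩, rfl⟩
      exact ⟨a, haI, by simp [g, f]⟩
    · rintro ⟨a, haI, rfl⟩
      exact ⟨⟨a, haI⟩, by simp [g, f]⟩
  rw [← hrange, ← hker]
  exact (LinearMap.quotKerEquivRange g).finrank_eq.symm

lemma quot_map_finrank' {M N : Type*} [AddCommGroup M] [Module k M] [AddCommGroup N] [Module k N]
    (φ : M →ₗ[k] N) (hinj : Function.Injective φ) (p q : Submodule k M) :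
    Module.finrank k (p ⧸ (q.comap p.subtype)) =
      Module.finrank k ((p.map φ) ⧸ ((q.map φ).comap (p.map φ).subtype)) := by
  let e := Submodule.equivMapOfInjective φ hinj p
  have hmap : (q.comap p.subtype).map (e : p →ₗ[k] p.map φ)
      = (q.map φ).comap (p.map φ).subtype := by
    ext z
    simp only [Submodule.mem_map, Submodule.mem_comap, LinearEquiv.coe_coe]
    constructor
    · rintro ⟨x, hx, rfl⟩
      exact ⟨x, hx, rfl⟩
    · rintro ⟨a, ha, hav⟩
      obtain ⟨zv, c, hcI, hcv⟩ := z
      have hac : a = c := hinj (show φ a = φ c by simpa using hav.trans hcv.symm)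
      refine ⟨⟨c, hcI⟩, by simpa [← hac] using ha, ?_⟩
      apply Subtype.ext
      simpa [e] using hcv
  exact (Submodule.Quotient.equiv _ _ e hmap).finrank_eq

lemma combined_finrank (A : Subalgebra k (PowerSeries k)) (I J : Ideal A) :
    Module.finrank k (Submodule.restrictScalars k (Ideal.map (Ideal.Quotient.mk J) I)) =
      Module.finrank k ((Submodule.map A.val.toLinearMap (I.restrictScalars k)) ⧸
        ((Submodule.map A.val.toLinearMap (J.restrictScalars k)).comap
          (Submodule.map A.val.toLinearMap (I.restrictScalars k)).subtype)) :=
  (key_finrank' I J).trans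
    (quot_map_finrank' A.val.toLinearMap Subtype.val_injective _ _)

lemma map_ideal_mul (A : Subalgebra k (PowerSeries k)) (I : Ideal A) :
    Submodule.map A.val.toLinearMap ((I * I).restrictScalars k)
      = (Submodule.map A.val.toLinearMap (I.restrictScalars k)) *
        (Submodule.map A.val.toLinearMap (I.restrictScalars k)) := by
  apply le_antisymm
  · rintro f ⟨a, ha, rfl⟩
    have ha' : a ∈ I * I := ha
    refine Submodule.mul_induction_on ha' ?_ ?_
    · intro x hx y hy
      show ((x : PowerSeries k) * (y : PowerSeries k)) ∈ _
      exact Submodule.mul_mem_mul ⟨x, hx, rfl⟩ ⟨y, hy, rfl⟩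
    · intro x y hx hy
      show ((x : PowerSeries k) + (y : PowerSeries k)) ∈ _
      exact add_mem hx hy
  · rw [Submodule.mul_le]
    rintro m ⟨a, ha, rfl⟩ n ⟨b, hb, rfl⟩
    refine ⟨a * b, ?_, ?_⟩
    · exact (Submodule.mul_mem_mul (show a ∈ I from ha) (show b ∈ I from hb) : a * b ∈ I * I)
    · simp

lemma add_finrank {M : Type*} [AddCommGroup M] [Module k M] (U V W : Submodule k M)
    (hWV : W ≤ V) (hVU : V ≤ U)
    [FiniteDimensional k (U ⧸ (W.comap U.subtype))] :
    Module.finrank k (U ⧸ (W.comap U.subtype)) =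
      Module.finrank k (V ⧸ (W.comap V.subtype)) +
      Module.finrank k (U ⧸ (V.comap U.subtype)) := by
  set w := W.comap U.subtype with hw
  set v := V.comap U.subtype with hv
  have hwv : w ≤ v := Submodule.comap_mono hWV
  have h1 := Submodule.finrank_quotient_add_finrank (v.map w.mkQ)
  have e1 : ((U ⧸ w) ⧸ (v.map w.mkQ)) ≃ₗ[k] U ⧸ v :=
    Submodule.quotientQuotientEquivQuotient w v hwv
  let g := w.mkQ.domRestrict v
  have hkg : LinearMap.ker g = w.comap v.subtype := by
    ext x; simp [g, LinearMap.mem_ker, Submodule.Quotient.mk_eq_zero]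
  have hrg : LinearMap.range g = v.map w.mkQ := by
    simp [g]
  have e2 : (v ⧸ (w.comap v.subtype)) ≃ₗ[k] (v.map w.mkQ) := by
    rw [← hkg, ← hrg]; exact LinearMap.quotKerEquivRange g
  have e3 : (V ⧸ (W.comap V.subtype)) ≃ₗ[k] (v ⧸ (w.comap v.subtype)) := by
    refine Submodule.Quotient.equiv _ _ (Submodule.comapSubtypeEquivOfLe hVU).symm ?_
    ext z
    simp only [Submodule.mem_map, Submodule.mem_comap]
    constructor
    · rintro ⟨x, hx, rfl⟩
      simpa [Submodule.comapSubtypeEquivOfLe, hw] using hx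
    · intro hz
      refine ⟨⟨(z : M), z.2⟩, by simpa [hw] using hz, ?_⟩
      apply Subtype.ext
      simp [Submodule.comapSubtypeEquivOfLe]
  rw [e3.finrank_eq, e2.finrank_eq, ← e1.finrank_eq]
  omega

/-- The conductor, as a `k`-submodule of `k⟦X⟧`. -/
def csub (R : Subalgebra k (PowerSeries k)) : Submodule k (PowerSeries k) where
  carrier := {h : PowerSeries k | ∀ g : PowerSeries k, h * g ∈ R}
  add_mem' := by
    intro a b ha hb g
    simpa [add_mul] using R.add_mem (ha g) (hb g)
  zero_mem' := by
    intro g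
    simpa using R.zero_mem
  smul_mem' := by
    intro c x hx g
    rw [smul_mul_assoc]
    exact R.smul_mem (hx g) c

lemma mem_csub {R : Subalgebra k (PowerSeries k)} {h : PowerSeries k} :
    h ∈ csub R ↔ ∀ g : PowerSeries k, h * g ∈ R := Iff.rfl

/-- A submodule of `k⟦X⟧` which contains `1` and is closed under multiplication, as a
subalgebra. -/
def subalgebraOfSubmodule (p : Submodule k (PowerSeries k)) (h1 : (1 : PowerSeries k) ∈ p)
    (hmul : ∀ a ∈ p, ∀ b ∈ p, a * b ∈ p) : Subalgebra k (PowerSeries k) where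
  carrier := p
  add_mem' := fun ha hb => p.add_mem ha hb
  zero_mem' := p.zero_mem
  mul_mem' := fun {a b} ha hb => hmul a ha b hb
  one_mem' := h1
  algebraMap_mem' := fun r => by
    rw [Algebra.algebraMap_eq_smul_one]; exact p.smul_mem r h1

lemma mem_mxl_map (A : Subalgebra k (PowerSeries k)) (f : PowerSeries k) :
    f ∈ Submodule.map A.val.toLinearMap ((mxl A).restrictScalars k)
      ↔ f ∈ A ∧ (constantCoeff : PowerSeries k →+* k) f = 0 := by
  constructor
  · rintro ⟨a, ha, rfl⟩
    have ha' : (constantCoeff : PowerSeries k →+* k) (a : PowerSeries k) = 0 := by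
      simpa [mxl, RingHom.mem_ker] using ha
    exact ⟨a.2, ha'⟩
  · rintro ⟨hf, hcc⟩
    refine ⟨⟨f, hf⟩, ?_, rfl⟩
    simpa [mxl, RingHom.mem_ker] using hcc

end Aux

set_option maxHeartbeats 4000000 in
theorem stmt9 {k : Type*} [Field k] [IsAlgClosed k] [CharZero k]
    (R : Subalgebra k (PowerSeries k)) (hR : R ≠ ⊤)
    (hN : ∃ N : ℕ, 1 ≤ N ∧ ∀ g : PowerSeries k, (X : PowerSeries k) ^ N * g ∈ R)
    (a1 : ℕ) (ha1pos : 0 < a1) (x1 : PowerSeries k) (hx1R : x1 ∈ R)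
    (hx1ord : x1.order = a1)
    (ha1min : ∀ f ∈ R, f ≠ 0 → (constantCoeff : PowerSeries k →+* k) f = 0 → (a1 : ℕ∞) ≤ f.order)
    (hC : ∀ r : R, (∀ g : PowerSeries k, (r : PowerSeries k) * g ∈ R) → r ∈ (mxl R) ^ 2)
    (S : Subalgebra k (PowerSeries k))
    (hS : S = Algebra.adjoin k ((R : Set (PowerSeries k)) ∪
        {h : PowerSeries k | ∀ g : PowerSeries k, (x1 * h) * g ∈ R})) :
    -- m_S² = m_R² as subsets of k⟦t⟧
    (Subtype.val '' (((mxl S) ^ 2 : Ideal S) : Set S)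
      = Subtype.val '' (((mxl R) ^ 2 : Ideal R) : Set R)) ∧
    -- edim S = edim R + s(R)
    edim S = edim R + redType R ⟨x1, hx1R⟩ := by
  classical
  obtain ⟨N, hN1, hNmem⟩ := hN
  -- x1 is nonzero and equals X^a1 times a unit
  have hx1ne : x1 ≠ 0 := by
    intro h
    rw [h, PowerSeries.order_zero] at hx1ord
    exact (ENat.coe_ne_top a1) hx1ord.symm
  have hXdvd : (X : PowerSeries k) ^ a1 ∣ x1 := by
    rw [PowerSeries.X_pow_dvd_iff]
    intro m hm
    exact PowerSeries.coeff_of_lt_order m (by rw [hx1ord]; exact_mod_cast hm)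
  obtain ⟨u, hu⟩ := hXdvd
  have hccu : (constantCoeff : PowerSeries k →+* k) u ≠ 0 := by
    have h := (PowerSeries.order_eq_nat.mp hx1ord).1
    intro h0
    apply h
    rw [hu]
    have h2 := PowerSeries.coeff_X_pow_mul u a1 0
    rw [zero_add] at h2
    rw [h2]
    simpa using h0
  obtain ⟨v, huv⟩ : ∃ v, u * v = 1 := by
    have hu' : IsUnit u := PowerSeries.isUnit_iff_constantCoeff.mpr (isUnit_iff_ne_zero.mpr hccu)
    exact hu'.exists_right_inv
  have hx1v : x1 * v = X ^ a1 := by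
    rw [hu, mul_assoc, huv, mul_one]
  have hccx1 : (constantCoeff : PowerSeries k →+* k) x1 = 0 := by
    have := PowerSeries.coeff_of_lt_order (φ := x1) 0 (by rw [hx1ord]; exact_mod_cast ha1pos)
    simpa using this
  -- the basic submodules
  set MR : Submodule k (PowerSeries k) :=
    Submodule.map R.val.toLinearMap ((mxl R).restrictScalars k) with hMRdef
  set MS : Submodule k (PowerSeries k) :=
    Submodule.map S.val.toLinearMap ((mxl S).restrictScalars k) with hMSdef
  set Dsub : Submodule k (PowerSeries k) :=
    (csub R).comap (LinearMap.mulLeft k x1) with hDdef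
  have mem_Dsub : ∀ h : PowerSeries k, h ∈ Dsub ↔ ∀ g : PowerSeries k, (x1 * h) * g ∈ R := by
    intro h; rfl
  -- divisibility facts
  have hdvd_R : ∀ f, f ∈ R → (constantCoeff : PowerSeries k →+* k) f = 0 → x1 ∣ f := by
    intro f hfR hcc
    by_cases hf0 : f = 0
    · simp [hf0]
    have hord := ha1min f hfR hf0 hcc
    have hX : (X : PowerSeries k) ^ a1 ∣ f := by
      rw [PowerSeries.X_pow_dvd_iff]
      intro m hm
      exact PowerSeries.coeff_of_lt_order m
        (lt_of_lt_of_le (by exact_mod_cast hm) hord)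
    obtain ⟨w, hw⟩ := hX
    exact ⟨v * w, by rw [hw, ← hx1v]; ring⟩
  have hdvd_MR : ∀ f ∈ MR, x1 ∣ f := by
    intro f hf
    obtain ⟨hfR, hcc⟩ := (mem_mxl_map R f).1 hf
    exact hdvd_R f hfR hcc
  have hdvd_MR2 : ∀ f ∈ MR * MR, x1 * x1 ∣ f := by
    intro f hf
    refine Submodule.mul_induction_on hf ?_ ?_
    · intro m hm n hn
      exact mul_dvd_mul (hdvd_MR m hm) (hdvd_MR n hn)
    · intro g h hg hh
      exact dvd_add hg hh
  -- the conductor is contained in MR * MR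
  have hCsub_mem : ∀ f ∈ csub R, f ∈ MR * MR := by
    intro f hf
    have hfR : f ∈ R := by simpa using hf 1
    have h2 : (⟨f, hfR⟩ : R) ∈ (mxl R) ^ 2 := hC ⟨f, hfR⟩ hf
    have h3 : f ∈ Submodule.map R.val.toLinearMap (((mxl R) ^ 2).restrictScalars k) :=
      ⟨⟨f, hfR⟩, h2, rfl⟩
    rwa [pow_two, map_ideal_mul] at h3
  -- elements of Dsub are divisible by x1 and have zero constant coefficient
  have hD_rep : ∀ d ∈ Dsub, ∃ e, d = x1 * e := by
    intro d hd
    have h1 : x1 * d ∈ csub R := hd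
    obtain ⟨e, he⟩ := hdvd_MR2 _ (hCsub_mem _ h1)
    exact ⟨e, mul_left_cancel₀ hx1ne (by rw [he, mul_assoc])⟩
  have hD_cc : ∀ d ∈ Dsub, (constantCoeff : PowerSeries k →+* k) d = 0 := by
    intro d hd
    obtain ⟨e, he⟩ := hD_rep d hd
    rw [he, map_mul, hccx1, zero_mul]
  -- csub is an ideal of k⟦X⟧, and csub ≤ Dsub
  have hcsub_ideal : ∀ c ∈ csub R, ∀ t : PowerSeries k, c * t ∈ csub R := by
    intro c hc t
    rw [mem_csub]
    intro g
    rw [mul_assoc]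
    exact hc (t * g)
  have hCD : csub R ≤ Dsub := by
    intro c hc
    rw [mem_Dsub]
    intro g
    have := hc (x1 * g)
    have heq : (x1 * c) * g = c * (x1 * g) := by ring
    rwa [heq]
  -- products of elements of Dsub lie in csub
  have hDD : ∀ d ∈ Dsub, ∀ d' ∈ Dsub, d * d' ∈ csub R := by
    intro d hd d' hd'
    obtain ⟨e, he⟩ := hD_rep d hd
    rw [mem_csub]
    intro g
    have h1 : x1 * d' ∈ csub R := hd'
    have heq : d * d' * g = (x1 * d') * (e * g) := by rw [he]; ring
    rw [heq]
    exact h1 (e * g)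
  -- the structure of S : S = R + Dsub
  have hsub_mul : ∀ a ∈ (Subalgebra.toSubmodule R ⊔ Dsub : Submodule k (PowerSeries k)),
      ∀ b ∈ (Subalgebra.toSubmodule R ⊔ Dsub : Submodule k (PowerSeries k)),
      a * b ∈ (Subalgebra.toSubmodule R ⊔ Dsub : Submodule k (PowerSeries k)) := by
    intro a ha b hb
    rw [Submodule.mem_sup] at ha hb
    obtain ⟨r, hr, d, hd, rfl⟩ := ha
    obtain ⟨r', hr', d', hd', rfl⟩ := hb
    have h1 : r * r' ∈ Subalgebra.toSubmodule R := R.mul_mem hr hr'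
    have h2 : r * d' ∈ Dsub := by
      rw [mem_Dsub]
      intro g
      have heq : (x1 * (r * d')) * g = (x1 * d') * (r * g) := by ring
      rw [heq]
      exact hd' (r * g)
    have h3 : d * r' ∈ Dsub := by
      rw [mem_Dsub]
      intro g
      have heq : (x1 * (d * r')) * g = (x1 * d) * (r' * g) := by ring
      rw [heq]
      exact hd (r' * g)
    have h4 : d * d' ∈ Dsub := hCD (hDD d hd d' hd')
    have heq : (r + d) * (r' + d') = r * r' + (r * d' + (d * r' + d * d')) := by ring
    rw [heq]
    exact Submodule.add_mem_sup h1 (add_mem h2 (add_mem h3 h4))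
  have hSmem : ∀ f, f ∈ S ↔ f ∈ (Subalgebra.toSubmodule R ⊔ Dsub : Submodule k (PowerSeries k)) := by
    intro f
    constructor
    · intro hf
      rw [hS] at hf
      have hadj : Algebra.adjoin k ((R : Set (PowerSeries k)) ∪
          {h : PowerSeries k | ∀ g : PowerSeries k, (x1 * h) * g ∈ R}) ≤
          subalgebraOfSubmodule (Subalgebra.toSubmodule R ⊔ Dsub)
            (Submodule.mem_sup_left (R.one_mem)) hsub_mul := by
        apply Algebra.adjoin_le
        rintro x (hx | hx)
        · exact Submodule.mem_sup_left hx
        · refine Submodule.mem_sup_right ?_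
          rw [mem_Dsub]
          exact hx
      exact hadj hf
    · intro hf
      rw [hS]
      rw [Submodule.mem_sup] at hf
      obtain ⟨r, hr, d, hd, rfl⟩ := hf
      refine add_mem (Algebra.subset_adjoin (Or.inl hr)) (Algebra.subset_adjoin (Or.inr ?_))
      rw [mem_Dsub] at hd
      exact hd
  -- MS = MR ⊔ Dsub
  have hMS : MS = MR ⊔ Dsub := by
    apply le_antisymm
    · intro f hf
      obtain ⟨hfS, hcc⟩ := (mem_mxl_map S f).1 hf
      have hf' := (hSmem f).1 hfS
      rw [Submodule.mem_sup] at hf'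
      obtain ⟨r, hr, d, hd, hrd⟩ := hf'
      have hccr : (constantCoeff : PowerSeries k →+* k) r = 0 := by
        have : (constantCoeff : PowerSeries k →+* k) r + (constantCoeff : PowerSeries k →+* k) d = 0 := by
          rw [← map_add, hrd, hcc]
        rw [hD_cc d hd, add_zero] at this
        exact this
      rw [← hrd]
      exact Submodule.add_mem_sup ((mem_mxl_map R r).2 ⟨hr, hccr⟩) hd
    · refine sup_le ?_ ?_
      · intro f hf
        obtain ⟨hfR, hcc⟩ := (mem_mxl_map R f).1 hf
        exact (mem_mxl_map S f).2 ⟨(hSmem f).2 (Submodule.mem_sup_left hfR), hcc⟩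
      · intro d hd
        exact (mem_mxl_map S d).2 ⟨(hSmem d).2 (Submodule.mem_sup_right hd), hD_cc d hd⟩
  -- MS * MS = MR * MR
  have hMSMS : MS * MS = MR * MR := by
    apply le_antisymm
    · rw [Submodule.mul_le]
      intro m hm n hn
      rw [hMS, Submodule.mem_sup] at hm hn
      obtain ⟨a, ha, d, hd, rfl⟩ := hm
      obtain ⟨b, hb, d', hd', rfl⟩ := hn
      have h1 : a * b ∈ MR * MR := Submodule.mul_mem_mul ha hb
      have h2 : a * d' ∈ MR * MR := by
        obtain ⟨e, he⟩ := hdvd_MR a ha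
        have hc : (x1 * d') * e ∈ csub R := hcsub_ideal _ hd' e
        have heq : a * d' = (x1 * d') * e := by rw [he]; ring
        rw [heq]
        exact hCsub_mem _ hc
      have h3 : d * b ∈ MR * MR := by
        obtain ⟨e, he⟩ := hdvd_MR b hb
        have hc : (x1 * d) * e ∈ csub R := hcsub_ideal _ hd e
        have heq : d * b = (x1 * d) * e := by rw [he]; ring
        rw [heq]
        exact hCsub_mem _ hc
      have h4 : d * d' ∈ MR * MR := hCsub_mem _ (hDD d hd d' hd')
      have heq : (a + d) * (b + d') = a * b + (a * d' + (d * b + d * d')) := by ring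
      rw [heq]
      exact add_mem h1 (add_mem h2 (add_mem h3 h4))
    · exact mul_le_mul' (hMS ▸ le_sup_left) (hMS ▸ le_sup_left)
  have hMap2 : ∀ (A : Subalgebra k (PowerSeries k)),
      Submodule.map A.val.toLinearMap (((mxl A) ^ 2).restrictScalars k)
        = Submodule.map A.val.toLinearMap ((mxl A).restrictScalars k) *
          Submodule.map A.val.toLinearMap ((mxl A).restrictScalars k) := by
    intro A
    rw [pow_two, map_ideal_mul]
  have hMapS2 : Submodule.map S.val.toLinearMap (((mxl S) ^ 2).restrictScalars k) = MR * MR := by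
    rw [hMap2 S, ← hMSdef, hMSMS]
  have hMapR2 : Submodule.map R.val.toLinearMap (((mxl R) ^ 2).restrictScalars k) = MR * MR := by
    rw [hMap2 R, ← hMRdef]
  constructor
  · -- first conjunct
    have h := hMapS2.trans hMapR2.symm
    have h' := congrArg (SetLike.coe) h
    rw [Submodule.map_coe, Submodule.map_coe] at h'
    simpa using h'
  · -- second conjunct
    have h_edimS : edim S = Module.finrank k (MS ⧸ ((MR * MR).comap MS.subtype)) := by
      have h := combined_finrank S (mxl S) ((mxl S) ^ 2)
      rw [hMapS2, ← hMSdef] at h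
      exact h
    have h_edimR : edim R = Module.finrank k (MR ⧸ ((MR * MR).comap MR.subtype)) := by
      have h := combined_finrank R (mxl R) ((mxl R) ^ 2)
      rw [hMapR2, ← hMRdef] at h
      exact h
    have h_red0 : redType R ⟨x1, hx1R⟩ = Module.finrank k
        ((Submodule.map R.val.toLinearMap ((condIdeal R).restrictScalars k)) ⧸
          ((Submodule.map R.val.toLinearMap
            ((Ideal.span {(⟨x1, hx1R⟩ : R)}).restrictScalars k)).comap
            (Submodule.map R.val.toLinearMap ((condIdeal R).restrictScalars k)).subtype)) :=
      combined_finrank R (condIdeal R) (Ideal.span {(⟨x1, hx1R⟩ : R)})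
    have hMC : Submodule.map R.val.toLinearMap ((condIdeal R).restrictScalars k) = csub R := by
      ext f
      constructor
      · rintro ⟨a, ha, rfl⟩
        exact ha
      · intro hf
        have hfR : f ∈ R := by simpa using hf 1
        exact ⟨⟨f, hfR⟩, hf, rfl⟩
    have hMX1 : ∀ f, f ∈ Submodule.map R.val.toLinearMap
        ((Ideal.span {(⟨x1, hx1R⟩ : R)}).restrictScalars k) ↔ ∃ r, r ∈ R ∧ f = x1 * r := by
      intro f
      constructor
      · rintro ⟨a, ha, rfl⟩
        obtain ⟨b, hb⟩ := Ideal.mem_span_singleton.mp ha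
        exact ⟨b, b.2, by rw [hb]; rfl⟩
      · rintro ⟨r, hrR, rfl⟩
        refine ⟨⟨x1, hx1R⟩ * ⟨r, hrR⟩, ?_, rfl⟩
        exact Ideal.mem_span_singleton.mpr ⟨⟨r, hrR⟩, rfl⟩
    -- the multiplication-by-x1 equivalence from Dsub to csub R
    have hcod : ∀ d : Dsub, ((LinearMap.mulLeft k x1).domRestrict Dsub) d ∈ csub R :=
      fun d => d.2
    have hbij : Function.Bijective
        (LinearMap.codRestrict (csub R) ((LinearMap.mulLeft k x1).domRestrict Dsub) hcod) := by
      constructor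
      · intro a b hab
        apply Subtype.ext
        have h1 : x1 * (a : PowerSeries k) = x1 * (b : PowerSeries k) :=
          congrArg Subtype.val hab
        exact mul_left_cancel₀ hx1ne h1
      · rintro ⟨c, hc⟩
        obtain ⟨e, he⟩ := hD_rep c (hCD hc)
        have heD : e ∈ Dsub := by
          rw [mem_Dsub]
          intro g
          rw [← he]
          exact hc g
        refine ⟨⟨e, heD⟩, Subtype.ext ?_⟩
        exact he.symm
    set eDC : Dsub ≃ₗ[k] csub R := LinearEquiv.ofBijective _ hbij with heDCdef
    have hmapDC : Submodule.map (eDC : Dsub →ₗ[k] csub R) ((Dsub ⊓ MR).comap Dsub.subtype)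
        = (Submodule.map R.val.toLinearMap
            ((Ideal.span {(⟨x1, hx1R⟩ : R)}).restrictScalars k)).comap (csub R).subtype := by
      ext z
      simp only [Submodule.mem_map, Submodule.mem_comap]
      constructor
      · rintro ⟨x, hx, rfl⟩
        exact (hMX1 _).2 ⟨(x : PowerSeries k), ((mem_mxl_map R _).1 hx.2).1, rfl⟩
      · intro hz
        obtain ⟨r, hrR, hr⟩ := (hMX1 _).1 hz
        have hrD : r ∈ Dsub := by
          rw [mem_Dsub]
          intro g
          rw [← hr]
          exact z.2 g
        have hrMR : r ∈ MR := (mem_mxl_map R r).2 ⟨hrR, hD_cc r hrD⟩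
        refine ⟨⟨r, hrD⟩, ⟨hrD, hrMR⟩, ?_⟩
        exact Subtype.ext hr.symm
    have hsup : Dsub ⊔ MR = MS := by rw [hMS, sup_comm]
    have h_red : redType R ⟨x1, hx1R⟩
        = Module.finrank k (MS ⧸ (MR.comap MS.subtype)) := by
      rw [h_red0, hMC, ← hsup]
      rw [← (LinearMap.quotientInfEquivSupQuotient Dsub MR).finrank_eq]
      exact (Submodule.Quotient.equiv _ _ eDC hmapDC).finrank_eq.symm
    -- finite dimensionality
    set ψ : MS →ₗ[k] (Fin (2 * N) → k) :=
      LinearMap.pi (fun i : Fin (2 * N) => (PowerSeries.coeff (R := k) (i : ℕ)).comp MS.subtype)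
      with hψdef
    have hψker : ∀ x : MS, ψ x = 0 → (X : PowerSeries k) ^ (2 * N) ∣ (x : PowerSeries k) := by
      intro x hx
      rw [PowerSeries.X_pow_dvd_iff]
      intro m hm
      have := congrFun hx ⟨m, hm⟩
      simpa [hψdef] using this
    have hccXN : (constantCoeff : PowerSeries k →+* k) ((X : PowerSeries k) ^ N) = 0 := by
      rw [map_pow, PowerSeries.constantCoeff_X, zero_pow (by omega : N ≠ 0)]
    haveI hFD : FiniteDimensional k (MS ⧸ ((MR * MR).comap MS.subtype)) := by
      haveI h1 : FiniteDimensional k (MS ⧸ LinearMap.ker ψ) :=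
        (LinearMap.quotKerEquivRange ψ).symm.finiteDimensional
      have hle : LinearMap.ker ψ ≤ (MR * MR).comap MS.subtype := by
        intro x hx
        obtain ⟨g, hg⟩ := hψker x (by simpa using hx)
        have hXN : ((X : PowerSeries k) ^ N * 1) ∈ MR :=
          (mem_mxl_map R _).2 ⟨hNmem 1, by rw [map_mul, hccXN, zero_mul]⟩
        have hXNg : ((X : PowerSeries k) ^ N * g) ∈ MR :=
          (mem_mxl_map R _).2 ⟨hNmem g, by rw [map_mul, hccXN, zero_mul]⟩
        show (x : PowerSeries k) ∈ MR * MR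
        have heq : (x : PowerSeries k)
            = ((X : PowerSeries k) ^ N * 1) * ((X : PowerSeries k) ^ N * g) := by
          rw [hg, two_mul, pow_add]
          ring
        rw [heq]
        exact Submodule.mul_mem_mul hXN hXNg
      exact Module.Finite.of_surjective
        (Submodule.mapQ (LinearMap.ker ψ) ((MR * MR).comap MS.subtype) LinearMap.id
          (by simpa using hle))
        (by
          intro y
          obtain ⟨x, rfl⟩ := Submodule.mkQ_surjective _ y
          exact ⟨Submodule.Quotient.mk x, by simp [Submodule.mapQ_apply]⟩)
    have hW : MR * MR ≤ MR := by
      rw [Submodule.mul_le]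
      intro m hm n hn
      obtain ⟨hmR, hmc⟩ := (mem_mxl_map R m).1 hm
      obtain ⟨hnR, hnc⟩ := (mem_mxl_map R n).1 hn
      exact (mem_mxl_map R _).2 ⟨R.mul_mem hmR hnR, by rw [map_mul, hmc, zero_mul]⟩
    have hV : MR ≤ MS := hMS ▸ le_sup_left
    rw [h_edimS, h_edimR, h_red]
    exact add_finrank MS MR (MR * MR) hW hV

end
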